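/- arXiv:2503.20285 — 2 statements merged into one kernel-verified Lean document; each statement's English description precedes it below -/
import Mathlib

section
/- Let Q₁, Q₂ : S × A → ℝ be bounded, with S, A finite nonempty. Define (T^π Q)(s,a) = r(s,a) + γ · E_{C}[ min_{s'∈C} E_{a'∼π(s')} Q(s',a') ], where γ ∈ [0,1), C ranges over finite nonempty subsets of S drawn from some distribution, and π(s') is a probability distribution over A. Then ‖T^π Q₁ − T^π Q₂‖_∞ ≤ γ ‖Q₁ − Q₂‖_∞. -/
open Finset

lemma inf'_abs_sub_le {β : Type*} (s : Finset β) (hs : s.Nonempty)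
    (f g : β → ℝ) (M : ℝ) (h : ∀ x ∈ s, |f x - g x| ≤ M) :
    |s.inf' hs f - s.inf' hs g| ≤ M := by
  rw [abs_sub_le_iff]
  constructor
  · obtain ⟨y, hy, hyeq⟩ := s.exists_mem_eq_inf' hs g
    have h1 : s.inf' hs f ≤ f y := inf'_le _ hy
    have h2 := (abs_sub_le_iff.mp (h y hy)).1
    linarith [hyeq, h1]
  · obtain ⟨y, hy, hyeq⟩ := s.exists_mem_eq_inf' hs f
    have h1 : s.inf' hs g ≤ g y := inf'_le _ hy
    have h2 := (abs_sub_le_iff.mp (h y hy)).2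
    linarith [hyeq, h1]

theorem stmt1 {S A ι : Type*} [Fintype S] [Fintype A] [Fintype ι]
    [Nonempty S] [Nonempty A]
    (r : S × A → ℝ) (γ : ℝ) (hγ0 : 0 ≤ γ) (hγ1 : γ < 1)
    (π : S → A → ℝ) (hπ0 : ∀ s a, 0 ≤ π s a) (hπ1 : ∀ s, ∑ a, π s a = 1)
    (w : S × A → ι → ℝ) (hw0 : ∀ p i, 0 ≤ w p i) (hw1 : ∀ p, ∑ i, w p i = 1)
    (C : S × A → ι → Finset S) (hC : ∀ p i, (C p i).Nonempty)
    (T : (S × A → ℝ) → (S × A → ℝ))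
    (hT : ∀ Q p, T Q p = r p + γ * ∑ i, w p i *
      (C p i).inf' (hC p i) (fun s' => ∑ a', π s' a' * Q (s', a')))
    (Q₁ Q₂ : S × A → ℝ) :
    univ.sup' univ_nonempty (fun p : S × A => |T Q₁ p - T Q₂ p|) ≤
      γ * univ.sup' univ_nonempty (fun p : S × A => |Q₁ p - Q₂ p|) := by
  set M := univ.sup' univ_nonempty (fun p : S × A => |Q₁ p - Q₂ p|) with hM
  have hMle : ∀ p : S × A, |Q₁ p - Q₂ p| ≤ M := fun p =>
    le_sup' (fun p : S × A => |Q₁ p - Q₂ p|) (mem_univ p)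
  apply sup'_le
  intro p _
  have key : ∀ i, |(C p i).inf' (hC p i) (fun s' => ∑ a', π s' a' * Q₁ (s', a'))
      - (C p i).inf' (hC p i) (fun s' => ∑ a', π s' a' * Q₂ (s', a'))| ≤ M := by
    intro i
    apply inf'_abs_sub_le
    intro s' _
    rw [← Finset.sum_sub_distrib]
    calc |∑ a', (π s' a' * Q₁ (s', a') - π s' a' * Q₂ (s', a'))|
        ≤ ∑ a', |π s' a' * Q₁ (s', a') - π s' a' * Q₂ (s', a')| :=
          Finset.abs_sum_le_sum_abs _ _
      _ = ∑ a', π s' a' * |Q₁ (s', a') - Q₂ (s', a')| := by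
          refine Finset.sum_congr rfl fun a' _ => ?_
          rw [← mul_sub, abs_mul, abs_of_nonneg (hπ0 s' a')]
      _ ≤ ∑ a', π s' a' * M := by
          refine Finset.sum_le_sum fun a' _ => ?_
          exact mul_le_mul_of_nonneg_left (hMle (s', a')) (hπ0 s' a')
      _ = M := by rw [← Finset.sum_mul, hπ1, one_mul]
  rw [hT, hT]
  have : r p + γ * (∑ i, w p i * (C p i).inf' (hC p i) (fun s' => ∑ a', π s' a' * Q₁ (s', a')))
      - (r p + γ * (∑ i, w p i * (C p i).inf' (hC p i) (fun s' => ∑ a', π s' a' * Q₂ (s', a'))))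
      = γ * ∑ i, w p i * ((C p i).inf' (hC p i) (fun s' => ∑ a', π s' a' * Q₁ (s', a'))
          - (C p i).inf' (hC p i) (fun s' => ∑ a', π s' a' * Q₂ (s', a'))) := by
    simp only [Finset.mul_sum]
    rw [add_sub_add_left_eq_sub, ← Finset.sum_sub_distrib]
    exact Finset.sum_congr rfl fun i _ => by ring
  rw [this, abs_mul, abs_of_nonneg hγ0]
  apply mul_le_mul_of_nonneg_left _ hγ0
  calc |∑ i, w p i * _| ≤ ∑ i, |w p i * _| := Finset.abs_sum_le_sum_abs _ _
    _ ≤ ∑ i, w p i * M := by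
        refine Finset.sum_le_sum fun i _ => ?_
        rw [abs_mul, abs_of_nonneg (hw0 p i)]
        exact mul_le_mul_of_nonneg_left (key i) (hw0 p i)
    _ = M := by rw [← Finset.sum_mul, hw1, one_mul]
end

section
/- Let Q^π_k denote the fixed point of the Bellman operator using the k-th order statistic min_k over a fixed candidate set C of size N'. Then Q^π_k is pointwise monotone nondecreasing in k: for k ≤ k', Q^π_k(s,a) ≤ Q^π_{k'}(s,a) for all (s,a). -/
/-- The `k`-th order statistic (`k`-th smallest value) of the tuple `a`. -/
noncomputable def orderStat {n : ℕ} (a : Fin n → ℝ) (k : Fin n) : ℝ :=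
  a (Tuple.sort a k)

lemma orderStat_le_aux {n : ℕ} (a b : Fin n → ℝ) (c : ℝ) (h : ∀ j, a j ≤ b j + c)
    (k l : Fin n) (hkl : k ≤ l) : orderStat a k ≤ orderStat b l + c := by
  classical
  set σ := Tuple.sort a
  set τ := Tuple.sort b
  set I : Finset (Fin n) := (Finset.Ici k).image σ
  set J : Finset (Fin n) := (Finset.Iic l).image τ
  have hI : I.card = n - k := by
    rw [Finset.card_image_of_injective _ σ.injective, Fin.card_Ici]
  have hJ : J.card = l + 1 := by
    rw [Finset.card_image_of_injective _ τ.injective, Fin.card_Iic]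
  have hnon : (I ∩ J).Nonempty := by
    by_contra hemp
    rw [Finset.not_nonempty_iff_eq_empty, ← Finset.disjoint_iff_inter_eq_empty] at hemp
    have := Finset.card_union_of_disjoint hemp
    have hle : (I ∪ J).card ≤ n := by
      simpa using Finset.card_le_univ (I ∪ J)
    rw [this, hI, hJ] at hle
    have hk := k.is_lt
    have hl := l.is_lt
    omega
  obtain ⟨j, hj⟩ := hnon
  rw [Finset.mem_inter] at hj
  obtain ⟨hjI, hjJ⟩ := hj
  obtain ⟨i, hi, rfl⟩ := Finset.mem_image.mp hjI
  obtain ⟨i', hi', hii'⟩ := Finset.mem_image.mp hjJ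
  have h1 : a (σ k) ≤ a (σ i) := Tuple.monotone_sort a (Finset.mem_Ici.mp hi)
  have h2 : b (τ i') ≤ b (τ l) := Tuple.monotone_sort b (Finset.mem_Iic.mp hi')
  calc orderStat a k = a (σ k) := rfl
    _ ≤ a (σ i) := h1
    _ ≤ b (σ i) + c := h (σ i)
    _ = b (τ i') + c := by rw [hii']
    _ ≤ b (τ l) + c := by linarith
    _ = orderStat b l + c := rfl

theorem stmt15 {S A : Type*} [Fintype S] [Fintype A] [Nonempty S] [Nonempty A]
    {N' : ℕ} (r : S × A → ℝ) (γ : ℝ) (hγ0 : 0 ≤ γ) (hγ1 : γ < 1)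
    (π : S → A → ℝ) (hπ0 : ∀ s a, 0 ≤ π s a) (hπ1 : ∀ s, ∑ a, π s a = 1)
    (C : S × A → Fin N' → S)
    (k k' : Fin N') (hkk' : k ≤ k')
    (Qk Qk' : S × A → ℝ)
    (hQk : ∀ p, Qk p = r p +
      γ * orderStat (fun j => ∑ a', π (C p j) a' * Qk (C p j, a')) k)
    (hQk' : ∀ p, Qk' p = r p +
      γ * orderStat (fun j => ∑ a', π (C p j) a' * Qk' (C p j, a')) k') :
    ∀ p, Qk p ≤ Qk' p := by
  classical
  set M : ℝ := Finset.univ.sup' (Finset.univ_nonempty) (fun p : S × A => Qk p - Qk' p) with hM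
  have hMle : ∀ p : S × A, Qk p - Qk' p ≤ M := fun p =>
    Finset.le_sup' (fun p : S × A => Qk p - Qk' p) (Finset.mem_univ p)
  obtain ⟨p0, _, hp0⟩ := Finset.exists_mem_eq_sup' (Finset.univ_nonempty (α := S × A))
    (fun p : S × A => Qk p - Qk' p)
  have key : M ≤ γ * M := by
    have hos : orderStat (fun j => ∑ a', π (C p0 j) a' * Qk (C p0 j, a')) k ≤
        orderStat (fun j => ∑ a', π (C p0 j) a' * Qk' (C p0 j, a')) k' + M := by
      apply orderStat_le_aux _ _ _ _ k k' hkk'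
      intro j
      have : ∑ a', π (C p0 j) a' * Qk (C p0 j, a')
          ≤ ∑ a', π (C p0 j) a' * (Qk' (C p0 j, a') + M) := by
        apply Finset.sum_le_sum
        intro a' _
        have := hMle (C p0 j, a')
        nlinarith [hπ0 (C p0 j) a']
      calc ∑ a', π (C p0 j) a' * Qk (C p0 j, a')
          ≤ ∑ a', π (C p0 j) a' * (Qk' (C p0 j, a') + M) := this
        _ = (∑ a', π (C p0 j) a' * Qk' (C p0 j, a')) + (∑ a', π (C p0 j) a') * M := by
            rw [Finset.sum_mul]; rw [← Finset.sum_add_distrib]; ring_nf; exact Finset.sum_congr rfl (fun _ _ => by ring)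
        _ = (∑ a', π (C p0 j) a' * Qk' (C p0 j, a')) + M := by rw [hπ1]; ring
    have hMeq : M = Qk p0 - Qk' p0 := hp0
    have hdiff : Qk p0 - Qk' p0 =
        γ * (orderStat (fun j => ∑ a', π (C p0 j) a' * Qk (C p0 j, a')) k -
          orderStat (fun j => ∑ a', π (C p0 j) a' * Qk' (C p0 j, a')) k') := by
      rw [hQk p0, hQk' p0]; ring
    have hmul := mul_le_mul_of_nonneg_left (show
        orderStat (fun j => ∑ a', π (C p0 j) a' * Qk (C p0 j, a')) k -
          orderStat (fun j => ∑ a', π (C p0 j) a' * Qk' (C p0 j, a')) k' ≤ M by linarith) hγ0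
    rw [hMeq] at hmul ⊢
    linarith [hmul, hdiff]
  have hM0 : M ≤ 0 := by nlinarith
  intro p
  have := hMle p
  linarith
end
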